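/- Let G be a finite simple graph, π a permutation of its vertices, L_i the set of vertices with exactly i−1 neighbors preceding them in π, and G_3 the subgraph induced on L_1 ∪ L_2 ∪ L_3. Then the number of edges of G_3 is at most |L_2| + 2|L_3|. -/

import Mathlib

open Finset
open scoped Classical

section Aux

variable {V : Type*} {n : ℕ}

/-- The later endpoint of an unordered pair, under the ordering induced by `σ`. -/
def latV (σ : V ≃ Fin n) : Sym2 V → V :=
  Sym2.lift ⟨fun a b => if σ a < σ b then b else a, by
    intro a b
    dsimp only
    split_ifs with h1 h2 h2
    · exact absurd h2 (asymm h1)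
    · rfl
    · rfl
    · exact σ.injective (le_antisymm (not_lt.1 h2) (not_lt.1 h1))⟩

/-- The earlier endpoint of an unordered pair, under the ordering induced by `σ`. -/
def earV (σ : V ≃ Fin n) : Sym2 V → V :=
  Sym2.lift ⟨fun a b => if σ a < σ b then a else b, by
    intro a b
    dsimp only
    split_ifs with h1 h2 h2
    · exact absurd h2 (asymm h1)
    · rfl
    · rfl
    · exact σ.injective (le_antisymm (not_lt.1 h1) (not_lt.1 h2))⟩

lemma latV_mk (σ : V ≃ Fin n) (a b : V) :
    latV σ s(a, b) = if σ a < σ b then b else a := rfl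

lemma earV_mk (σ : V ≃ Fin n) (a b : V) :
    earV σ s(a, b) = if σ a < σ b then a else b := rfl

lemma decomp (σ : V ≃ Fin n) (e : Sym2 V) (he : ¬ e.IsDiag) :
    e = s(earV σ e, latV σ e) ∧ σ (earV σ e) < σ (latV σ e) := by
  induction e using Sym2.ind with
  | _ a b =>
    rw [Sym2.mk_isDiag_iff] at he
    rw [latV_mk, earV_mk]
    by_cases h : σ a < σ b
    · simp [h]
    · have hlt : σ b < σ a :=
        lt_of_le_of_ne (not_lt.1 h) (fun hc => he (σ.injective hc.symm))
      simp [h, hlt, Sym2.eq_swap]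

end Aux

/-- For any ordering `σ` of the vertices, letting `L_i` be the set of vertices with
exactly `i-1` neighbors preceding them, the number of edges of the subgraph induced on
`L₁ ∪ L₂ ∪ L₃` is at most `|L₂| + 2|L₃|`. -/
theorem edges_G3_le {V : Type*} [Fintype V] [DecidableEq V]
    (G : SimpleGraph V) [DecidableRel G.Adj] (σ : V ≃ Fin (Fintype.card V)) :
    (G.edgeFinset.filter (fun e => ∀ x ∈ e,
        ((G.neighborFinset x).filter (fun w => σ w < σ x)).card ≤ 2)).card
      ≤ (univ.filter (fun v : V =>
            ((G.neighborFinset v).filter (fun w => σ w < σ v)).card = 1)).card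
        + 2 * (univ.filter (fun v : V =>
            ((G.neighborFinset v).filter (fun w => σ w < σ v)).card = 2)).card := by
  classical
  set b : V → ℕ := fun v => ((G.neighborFinset v).filter (fun w => σ w < σ v)).card with hb
  set S := G.edgeFinset.filter (fun e => ∀ x ∈ e,
      ((G.neighborFinset x).filter (fun w => σ w < σ x)).card ≤ 2) with hS
  have key : S.card = ∑ v, (S.filter (fun e => latV σ e = v)).card :=
    card_eq_sum_card_fiberwise (fun e _ => mem_univ _)
  -- facts about edges in S
  have edge_facts : ∀ e ∈ S, e = s(earV σ e, latV σ e) ∧ σ (earV σ e) < σ (latV σ e) := by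
    intro e heS
    have heE : e ∈ G.edgeFinset := (mem_filter.1 heS).1
    exact decomp σ e (SimpleGraph.not_isDiag_of_mem_edgeSet G
      (SimpleGraph.mem_edgeFinset.1 heE))
  have fiber_le : ∀ v, (S.filter (fun e => latV σ e = v)).card ≤ b v := by
    intro v
    apply card_le_card_of_injOn (earV σ)
    · intro e he
      obtain ⟨heS, hlat⟩ := mem_filter.1 he
      obtain ⟨hdec, hlt⟩ := edge_facts e heS
      have heE : e ∈ G.edgeFinset := (mem_filter.1 heS).1
      have hadj : G.Adj (earV σ e) (latV σ e) := by
        rw [← SimpleGraph.mem_edgeSet, ← hdec]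
        exact SimpleGraph.mem_edgeFinset.1 heE
      rw [hlat] at hadj hlt
      simp only [hb, Finset.mem_coe, mem_filter, SimpleGraph.mem_neighborFinset]
      exact ⟨hadj.symm, hlt⟩
    · intro e1 h1 e2 h2 hee
      obtain ⟨h1S, h1lat⟩ := mem_filter.1 h1
      obtain ⟨h2S, h2lat⟩ := mem_filter.1 h2
      rw [(edge_facts e1 h1S).1, (edge_facts e2 h2S).1, hee, h1lat, h2lat]
  have main_bound : ∀ v, (S.filter (fun e => latV σ e = v)).card ≤
      (if b v = 1 then 1 else 0) + 2 * (if b v = 2 then 1 else 0) := by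
    intro v
    rcases (S.filter (fun e => latV σ e = v)).eq_empty_or_nonempty with hF | hF
    · simp [hF]
    · obtain ⟨e, he⟩ := hF
      obtain ⟨heS, hlat⟩ := mem_filter.1 he
      have hle2 : b v ≤ 2 := by
        have := (mem_filter.1 heS).2 (latV σ e) (by
          conv_lhs => rw [(edge_facts e heS).1]
          simp [Sym2.mem_iff])
        rw [hlat] at this
        exact this
      have hge1 : 1 ≤ b v := by
        have h1 : 1 ≤ (S.filter (fun e => latV σ e = v)).card :=
          card_pos.2 ⟨e, he⟩
        exact le_trans h1 (fiber_le v)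
      interval_cases h : b v
      · simpa [h] using fiber_le v
      · simpa [h] using fiber_le v
  calc S.card = ∑ v, (S.filter (fun e => latV σ e = v)).card := key
    _ ≤ ∑ v : V, ((if b v = 1 then 1 else 0) + 2 * (if b v = 2 then 1 else 0)) :=
        sum_le_sum (fun v _ => main_bound v)
    _ = (∑ v : V, if b v = 1 then 1 else 0) + 2 * (∑ v : V, if b v = 2 then 1 else 0) := by
        rw [sum_add_distrib, mul_sum]
    _ = _ := by rw [sum_boole, sum_boole]; simp [hb]
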